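/- Let δ be an ordinal and let ⟨I_α : α ≤ δ⟩ be an increasing chain of linear orders (each I_α a suborder of I_δ) which is continuous, i.e. for every limit ordinal β ≤ δ, I_β = ⋃_{α<β} I_α. If for every α < δ the order I_α is nicely embedded in I_{α+1}, then for every α ≤ δ the order I_α is nicely embedded in I_δ. (Fact (E) in the proof of Criterion 2.6; the order-theoretic content of Observation 1.11.) -/

import Mathlib

open Filter Cardinal

universe u v w

/-- `I` is nicely embedded in `J` (along the inclusion `e : I ↪o J`): there are a nonempty
set `S` and an ultrafilter `D` on `S` together with an order embedding of `J` into the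
ultrapower `I^S/D` whose restriction to `I` is the canonical diagonal embedding. -/
def NicelyEmbedded {I : Type u} {J : Type v} [LinearOrder I] [LinearOrder J]
    (e : I ↪o J) : Prop :=
  ∃ (S : Type w) (_ : Nonempty S) (D : Ultrafilter S)
    (g : J ↪o Filter.Germ (D : Filter S) I),
    ∀ t : I, g (e t) = (↑t : Filter.Germ (D : Filter S) I)

/-- The inclusion of a subset `A` of a linear order into a subset `B ⊇ A`, as an order
embedding between the induced suborders. -/
def Set.inclEmb {T : Type u} [LinearOrder T] {A B : Set T} (h : A ⊆ B) : A ↪o B :=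
  OrderEmbedding.ofStrictMono (Set.inclusion h) (fun _ _ hab => hab)

/-- The suborder `A` of a linear order `T` is nicely embedded in the suborder `B`. -/
def NicelyEmbeddedSet {T : Type u} [LinearOrder T] (A B : Set T) : Prop :=
  ∃ h : A ⊆ B, NicelyEmbedded.{u, u, w} (Set.inclEmb h)

/-! ### Auxiliary machinery -/

universe u' w1 w2

/-- A representative of a germ. -/
noncomputable def germRep {S : Type*} {β : Type*} {l : Filter S} (x : Filter.Germ l β) :
    S → β :=
  Quotient.out x

lemma germRep_coe {S β : Type*} {l : Filter S} (x : Filter.Germ l β) :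
    (↑(germRep x) : Filter.Germ l β) = x :=
  Quotient.out_eq x

lemma germ_lt_iff {S β : Type*} [LinearOrder β] {D : Ultrafilter S}
    {x y : Filter.Germ (D : Filter S) β} :
    x < y ↔ ∀ᶠ s in (D : Filter S), germRep x s < germRep y s := by
  conv_lhs => rw [← germRep_coe x, ← germRep_coe y]
  exact Filter.Germ.coe_lt

lemma germRep_eventually_eq {S β : Type*} {l : Filter S} {x : Filter.Germ l β} {f : S → β}
    (h : x = ↑f) : ∀ᶠ s in l, germRep x s = f s := by
  have : (↑(germRep x) : Filter.Germ l β) = ↑f := by rw [germRep_coe, h]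
  exact Filter.Germ.coe_eq.mp this

/-- The `E`-sum of the ultrafilters `D k`. -/
def sigmaUF {K : Type*} {S : K → Type*} (E : Ultrafilter K) (D : ∀ k, Ultrafilter (S k)) :
    Ultrafilter (Σ k, S k) :=
  E.bind fun k => (D k).map (Sigma.mk k)

lemma mem_sigmaUF {K : Type*} {S : K → Type*} {E : Ultrafilter K} {D : ∀ k, Ultrafilter (S k)}
    {A : Set (Σ k, S k)} :
    A ∈ sigmaUF E D ↔ {k | {s | (⟨k, s⟩ : Σ k, S k) ∈ A} ∈ D k} ∈ E := by
  show A ∈ Filter.bind (↑E) (fun k => ↑((D k).map (Sigma.mk k))) ↔ _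
  rw [Filter.mem_bind']
  rfl

lemma nicelyEmbeddedSet_refl {T : Type u'} [LinearOrder T] (A : Set T) :
    NicelyEmbeddedSet.{u', w1} A A := by
  refine ⟨subset_rfl, PUnit.{w1 + 1}, ⟨PUnit.unit⟩, (pure PUnit.unit : Ultrafilter PUnit),
    OrderEmbedding.ofStrictMono (fun t => (↑t : Filter.Germ _ ↥A))
      (fun a b hab => Filter.Germ.const_lt hab), fun t => ?_⟩
  rfl

lemma nicelyEmbeddedSet_trans {T : Type u'} [LinearOrder T] {A B C : Set T}
    (h1 : NicelyEmbeddedSet.{u', w1} A B) (h2 : NicelyEmbeddedSet.{u', w2} B C) :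
    NicelyEmbeddedSet.{u', max w1 w2} A C := by
  obtain ⟨hAB, S1, hS1, D1, g1, hg1⟩ := h1
  obtain ⟨hBC, S2, hS2, D2, g2, hg2⟩ := h2
  set Dt : Ultrafilter (Σ _ : S2, S1) := sigmaUF D2 (fun _ => D1) with hDt
  set Gf : ↥C → (Σ _ : S2, S1) → ↥A :=
    fun c p => germRep (g1 (germRep (g2 c) p.1)) p.2 with hGf
  have hmono : StrictMono (fun c => (↑(Gf c) : Filter.Germ (Dt : Filter (Σ _ : S2, S1)) ↥A)) := by
    intro c c' hcc
    show (↑(Gf c) : Filter.Germ (Dt : Filter (Σ _ : S2, S1)) ↥A) < ↑(Gf c')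
    rw [Filter.Germ.coe_lt]
    have h2' : ∀ᶠ s2 in (D2 : Filter S2), germRep (g2 c) s2 < germRep (g2 c') s2 :=
      germ_lt_iff.mp (g2.strictMono hcc)
    rw [Filter.eventually_iff]
    rw [Ultrafilter.mem_coe, hDt, mem_sigmaUF]
    filter_upwards [h2'] with s2 hs2
    exact germ_lt_iff.mp (g1.strictMono hs2)
  refine ⟨hAB.trans hBC, (Σ _ : S2, S1), ⟨⟨hS2.some, hS1.some⟩⟩, Dt,
    OrderEmbedding.ofStrictMono _ hmono, fun t => ?_⟩
  show (↑(Gf (Set.inclEmb (hAB.trans hBC) t)) : Filter.Germ (Dt : Filter (Σ _ : S2, S1)) ↥A) = ↑t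
  have hconst : ((↑t : Filter.Germ (Dt : Filter (Σ _ : S2, S1)) ↥A))
      = ↑(fun _ : (Σ _ : S2, S1) => t) := rfl
  rw [hconst, Filter.Germ.coe_eq]
  set tB : ↥B := ⟨t.1, hAB t.2⟩ with htB
  have hincl : Set.inclEmb (hAB.trans hBC) t = Set.inclEmb hBC tB := rfl
  have h2' : g2 (Set.inclEmb (hAB.trans hBC) t)
      = (↑tB : Filter.Germ (D2 : Filter S2) ↥B) := by
    rw [hincl]; exact hg2 tB
  have h2'' := germRep_eventually_eq h2'
  rw [Filter.EventuallyEq, Filter.eventually_iff, Ultrafilter.mem_coe, hDt, mem_sigmaUF]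
  filter_upwards [h2''] with s2 hs2
  have h1' : g1 (germRep (g2 (Set.inclEmb (hAB.trans hBC) t)) s2)
      = (↑t : Filter.Germ (D1 : Filter S1) ↥A) := by
    rw [hs2]; exact hg1 t
  have := germRep_eventually_eq h1'
  exact this

lemma nicelyEmbeddedSet_limit {T : Type u} [LinearOrder T] {β : Ordinal.{v}}
    (hβ : Order.IsSuccLimit β) (I : Ordinal.{v} → Set T) {α : Ordinal.{v}} (hαβ : α < β)
    (hmono : ∀ γ γ' : Ordinal.{v}, γ ≤ γ' → γ' ≤ β → I γ ⊆ I γ')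
    (hcont : I β = ⋃ (γ : Ordinal.{v}) (_ : γ < β), I γ)
    (hIH : ∀ γ, α ≤ γ → γ < β → NicelyEmbeddedSet.{u, max v w} (I α) (I γ)) :
    NicelyEmbeddedSet.{u, max v w} (I α) (I β) := by
  classical
  have hαIβ : I α ⊆ I β := hmono α β hαβ.le le_rfl
  by_cases hne : Nonempty ↥(I β)
  swap
  · haveI : IsEmpty ↥(I β) := not_nonempty_iff.mp hne
    exact ⟨hαIβ, PUnit, ⟨PUnit.unit⟩, (pure PUnit.unit : Ultrafilter PUnit),
      OrderEmbedding.ofIsEmpty, fun t =>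
        absurd (Nonempty.intro (⟨t.1, hαIβ t.2⟩ : ↥(I β))) hne⟩
  -- nonempty case
  haveI hκne : Nonempty β.ToType := Ordinal.toType_nonempty_iff_ne_zero.mpr hβ.pos.ne'
  set ord : β.ToType → Ordinal.{v} :=
    fun x => @Ordinal.typein β.ToType (· < ·) isWellOrder_lt x with hord
  have hord_lt : ∀ x : β.ToType, ord x < β := fun x => Ordinal.typein_lt_self x
  set γf : β.ToType → Ordinal.{v} := fun x => α ⊔ ord x with hγf
  have hγf_ge : ∀ x, α ≤ γf x := fun x => le_sup_left
  have hγf_lt : ∀ x, γf x < β := fun x => max_lt hαβ (hord_lt x)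
  choose hsub S hS D g hg using fun x : β.ToType => hIH (γf x) (hγf_ge x) (hγf_lt x)
  -- `I α` is nonempty
  obtain ⟨t0⟩ := hne
  have hmemU : ∀ t : ↥(I β), ∃ γ, γ < β ∧ (t : T) ∈ I γ := by
    intro t
    have : (t : T) ∈ ⋃ (γ : Ordinal.{v}) (_ : γ < β), I γ := hcont ▸ t.2
    obtain ⟨γ, hγ, ht⟩ := Set.mem_iUnion₂.mp this
    exact ⟨γ, hγ, ht⟩
  haveI hIαne : Nonempty ↥(I α) := by
    obtain ⟨γ0, hγ0, ht0⟩ := hmemU t0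
    obtain ⟨hsub', S', hS', D', g', _⟩ := hIH (α ⊔ γ0) le_sup_left (max_lt hαβ hγ0)
    exact ⟨germRep (g' ⟨t0.1, hmono γ0 (α ⊔ γ0) le_sup_right (max_lt hαβ hγ0).le ht0⟩)
      hS'.some⟩
  -- tail sets belong to the ultrafilter `E`
  haveI : (atTop : Filter β.ToType).NeBot := atTop_neBot
  set E : Ultrafilter β.ToType := Ultrafilter.of atTop with hE
  have htail : ∀ γ, γ < β → {x : β.ToType | γ ≤ ord x} ∈ E := by
    intro γ hγ
    have hc : γ < @Ordinal.type β.ToType (· < ·) isWellOrder_lt := by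
      rw [Ordinal.type_toType]; exact hγ
    obtain ⟨c, hcord⟩ := @Ordinal.typein_surj β.ToType (· < ·) isWellOrder_lt γ hc
    have hsubs : {x : β.ToType | c ≤ x} ⊆ {x : β.ToType | γ ≤ ord x} := by
      intro x hx
      have h1 : ord c ≤ ord x := by
        simp only [hord]
        rw [Ordinal.typein_le_typein]
        exact not_lt.mpr hx
      have h2 : ord c = γ := by simp only [hord]; exact hcord
      rw [← h2]; exact h1
    exact Filter.mem_of_superset (Ultrafilter.of_le atTop (Filter.mem_atTop c)) hsubs
  -- for each `t`, eventually `t` belongs to `I (γf x)`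
  have hmem_tail : ∀ t : ↥(I β), ∃ γ, γ < β ∧
      ∀ x : β.ToType, γ ≤ ord x → (t : T) ∈ I (γf x) := by
    intro t
    obtain ⟨γ0, hγ0, ht⟩ := hmemU t
    refine ⟨γ0, hγ0, fun x hx => ?_⟩
    exact hmono γ0 (γf x) (hx.trans le_sup_right) (hγf_lt x).le ht
  -- the total ultrafilter and the embedding
  set Dt : Ultrafilter (Σ x : β.ToType, S x) := sigmaUF E D with hDt
  set h : ↥(I β) → ∀ x : β.ToType, Filter.Germ (D x : Filter (S x)) ↥(I α) := fun t x =>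
    if htx : (t : T) ∈ I (γf x) then g x ⟨t.1, htx⟩
    else (↑(fun _ : S x => Classical.arbitrary ↥(I α))
      : Filter.Germ (D x : Filter (S x)) ↥(I α)) with hh
  set Gf : ↥(I β) → (Σ x : β.ToType, S x) → ↥(I α) := fun t p => germRep (h t p.1) p.2 with hGf
  have hmono' : StrictMono (fun t => (↑(Gf t) : Filter.Germ (Dt : Filter (Σ x : β.ToType, S x)) ↥(I α))) := by
    intro t t' htt
    show (↑(Gf t) : Filter.Germ (Dt : Filter (Σ x : β.ToType, S x)) ↥(I α)) < ↑(Gf t')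
    rw [Filter.Germ.coe_lt]
    obtain ⟨γt, hγt, hmt⟩ := hmem_tail t
    obtain ⟨γt', hγt', hmt'⟩ := hmem_tail t'
    rw [Filter.eventually_iff, Ultrafilter.mem_coe, hDt, mem_sigmaUF]
    refine Filter.mem_of_superset (htail (γt ⊔ γt') (max_lt hγt hγt')) ?_
    intro x hx
    have hxt : (t : T) ∈ I (γf x) := hmt x (le_sup_left.trans hx)
    have hxt' : (t' : T) ∈ I (γf x) := hmt' x (le_sup_right.trans hx)
    have hlt : g x ⟨t.1, hxt⟩ < g x ⟨t'.1, hxt'⟩ := by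
      apply (g x).strictMono
      exact Subtype.mk_lt_mk.mpr (Subtype.coe_lt_coe.mpr htt)
    have := germ_lt_iff.mp hlt
    show {s : S x | Gf t ⟨x, s⟩ < Gf t' ⟨x, s⟩} ∈ D x
    have hht : h t x = g x ⟨t.1, hxt⟩ := dif_pos hxt
    have hht' : h t' x = g x ⟨t'.1, hxt'⟩ := dif_pos hxt'
    filter_upwards [this] with s hs
    show germRep (h t x) s < germRep (h t' x) s
    rw [hht, hht']; exact hs
  refine ⟨hαIβ, (Σ x : β.ToType, S x), ⟨⟨Classical.arbitrary β.ToType, (hS (Classical.arbitrary β.ToType)).some⟩⟩,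
    Dt, OrderEmbedding.ofStrictMono _ hmono', fun t => ?_⟩
  show (↑(Gf (Set.inclEmb hαIβ t)) : Filter.Germ (Dt : Filter (Σ x : β.ToType, S x)) ↥(I α)) = ↑t
  have hconst : ((↑t : Filter.Germ (Dt : Filter (Σ x : β.ToType, S x)) ↥(I α)))
      = ↑(fun _ : (Σ x : β.ToType, S x) => t) := rfl
  rw [hconst, Filter.Germ.coe_eq]
  rw [Filter.EventuallyEq, Filter.eventually_iff, Ultrafilter.mem_coe, hDt, mem_sigmaUF]
  refine Filter.mem_of_superset (Filter.univ_mem) ?_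
  intro x _
  set tβ : ↥(I β) := Set.inclEmb hαIβ t with htβ
  have hxt : (tβ : T) ∈ I (γf x) := hmono α (γf x) (hγf_ge x) (hγf_lt x).le t.2
  have hht : h tβ x = g x ⟨tβ.1, hxt⟩ := dif_pos hxt
  have heq : g x ⟨tβ.1, hxt⟩ = (↑t : Filter.Germ (D x : Filter (S x)) ↥(I α)) := by
    have : (⟨tβ.1, hxt⟩ : ↥(I (γf x))) = Set.inclEmb (hsub x) t := rfl
    rw [this]; exact hg x t
  have : h tβ x = (↑t : Filter.Germ (D x : Filter (S x)) ↥(I α)) := by rw [hht, heq]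
  have h3 := germRep_eventually_eq this
  show {s : S x | Gf tβ ⟨x, s⟩ = t} ∈ D x
  filter_upwards [h3] with s hs
  exact hs

/-- Fact (E) in the proof of Criterion 2.6 (the order-theoretic content of
Observation 1.11): if `⟨I_α : α ≤ δ⟩` is a continuous increasing chain of linear orders
and `I_α` is nicely embedded in `I_{α+1}` for every `α < δ`, then `I_α` is nicely
embedded in `I_δ` for every `α ≤ δ`. -/
theorem nicelyEmbedded_of_chain {T : Type u} [LinearOrder T] (δ : Ordinal.{v})
    (I : Ordinal.{v} → Set T)
    (hmono : ∀ α β : Ordinal.{v}, α ≤ β → β ≤ δ → I α ⊆ I β)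
    (hcont : ∀ β : Ordinal.{v}, β ≤ δ → Order.IsSuccLimit β →
      I β = ⋃ (α : Ordinal.{v}) (_ : α < β), I α)
    (hsucc : ∀ α : Ordinal.{v}, α < δ → NicelyEmbeddedSet.{u, w} (I α) (I (α + 1))) :
    ∀ α : Ordinal.{v}, α ≤ δ → NicelyEmbeddedSet.{u, max v w} (I α) (I δ) := by
  suffices H : ∀ β : Ordinal.{v}, β ≤ δ → ∀ α, α ≤ β →
      NicelyEmbeddedSet.{u, max v w} (I α) (I β) by
    intro α hα; exact H δ le_rfl α hα
  intro β
  induction β using Ordinal.limitRecOn with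
  | zero =>
    intro _ α hα
    rw [nonpos_iff_eq_zero.mp hα]
    exact nicelyEmbeddedSet_refl _
  | add_one β IH =>
    intro hβδ α hα
    rcases eq_or_lt_of_le hα with h | h
    · rw [h]; exact nicelyEmbeddedSet_refl _
    · have hαβ : α ≤ β := Order.lt_add_one_iff.mp h
      have hβ1 : β < β + 1 := Order.lt_add_one_iff.mpr le_rfl
      have hβδ' : β ≤ δ := hβ1.le.trans hβδ
      have hβltδ : β < δ := lt_of_lt_of_le hβ1 hβδ
      have h2 := hsucc β hβltδ
      exact nicelyEmbeddedSet_trans (IH hβδ' α hαβ) h2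
  | limit β hlim IH =>
    intro hβδ α hα
    rcases eq_or_lt_of_le hα with h | h
    · rw [h]; exact nicelyEmbeddedSet_refl _
    · exact nicelyEmbeddedSet_limit hlim I h
        (fun γ γ' hle hle' => hmono γ γ' hle (hle'.trans hβδ))
        (hcont β hβδ hlim)
        (fun γ hαγ hγβ => IH γ hγβ (hγβ.le.trans hβδ) α hαγ)
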